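/- Let B be a commutative ring and let F be a functor from commutative B-algebras to groups. If two points x₀, x₁ ∈ F(B) are R-equivalent, then they are directly R-equivalent. -/

import Mathlib

noncomputable section

open Polynomial

/-- The multiplicative subset `Σ` of `B[t]` consisting of the polynomials whose values
at `t = 0` and `t = 1` are units of `B`. -/
def RSigma (B : Type*) [CommRing B] : Submonoid (Polynomial B) where
  carrier := {P | IsUnit (P.eval 0) ∧ IsUnit (P.eval 1)}
  mul_mem' := fun ha hb =>
    ⟨by rw [eval_mul]; exact ha.1.mul hb.1, by rw [eval_mul]; exact ha.2.mul hb.2⟩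
  one_mem' := ⟨by simp, by simp⟩

theorem mem_RSigma {B : Type*} [CommRing B] {P : Polynomial B} :
    P ∈ RSigma B ↔ IsUnit (P.eval 0) ∧ IsUnit (P.eval 1) := Iff.rfl

/-- The localization `B[t]_Σ` of `B[t]` at `Σ`. -/
abbrev RLoc (B : Type*) [CommRing B] := Localization (RSigma B)

/-- Evaluation at `t = 0`, extended to `B[t]_Σ`, as a `B`-algebra homomorphism. -/
def ev0 (B : Type*) [CommRing B] : RLoc B →ₐ[B] B :=
  IsLocalization.liftAlgHom (M := RSigma B) (f := Polynomial.aeval (0 : B))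
    (fun y => by simpa using (mem_RSigma.mp y.2).1)

/-- Evaluation at `t = 1`, extended to `B[t]_Σ`, as a `B`-algebra homomorphism. -/
def ev1 (B : Type*) [CommRing B] : RLoc B →ₐ[B] B :=
  IsLocalization.liftAlgHom (M := RSigma B) (f := Polynomial.aeval (1 : B))
    (fun y => by simpa using (mem_RSigma.mp y.2).2)


universe u

/-- Evaluation at `t = 0` on `C[t]_{Σ_C}`, as a homomorphism of `B`-algebras. -/
def ev0R (B : Type u) [CommRing B] (C : Type u) [CommRing C] [Algebra B C] :
    RLoc C →ₐ[B] C :=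
  IsLocalization.liftAlgHom (M := RSigma C)
    (f := (Polynomial.aeval (0 : C)).restrictScalars B)
    (fun y => by simpa using (mem_RSigma.mp y.2).1)

/-- Evaluation at `t = 1` on `C[t]_{Σ_C}`, as a homomorphism of `B`-algebras. -/
def ev1R (B : Type u) [CommRing B] (C : Type u) [CommRing C] [Algebra B C] :
    RLoc C →ₐ[B] C :=
  IsLocalization.liftAlgHom (M := RSigma C)
    (f := (Polynomial.aeval (1 : C)).restrictScalars B)
    (fun y => by simpa using (mem_RSigma.mp y.2).2)


/-- A functor from the category of commutative `B`-algebras (in the universe `u`)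
to the category of groups. -/
structure GroupValuedFunctor (B : Type u) [CommRing B] where
  obj : (C : Type u) → [CommRing C] → [Algebra B C] → Type u
  grp : (C : Type u) → [CommRing C] → [Algebra B C] → Group (obj C)
  map : {C D : Type u} → [CommRing C] → [Algebra B C] → [CommRing D] → [Algebra B D] →
    (C →ₐ[B] D) → obj C → obj D
  map_id : ∀ (C : Type u) [CommRing C] [Algebra B C], map (AlgHom.id B C) = id
  map_comp : ∀ {C D E : Type u} [CommRing C] [Algebra B C] [CommRing D] [Algebra B D]
    [CommRing E] [Algebra B E] (f : C →ₐ[B] D) (g : D →ₐ[B] E),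
    map (g.comp f) = map g ∘ map f
  map_mul : ∀ {C D : Type u} [CommRing C] [Algebra B C] [CommRing D] [Algebra B D]
    (f : C →ₐ[B] D) (x y : obj C),
    haveI := grp C; haveI := grp D; map f (x * y) = map f x * map f y

/-- Two points `x₀ x₁ ∈ F(C)` are directly R-equivalent if they are the two
evaluations of a point of `F(C[t]_Σ)`. -/
def DirectRG (B : Type u) [CommRing B] (F : GroupValuedFunctor B)
    (C : Type u) [CommRing C] [Algebra B C] (x₀ x₁ : F.obj C) : Prop :=
  ∃ x : F.obj (RLoc C), F.map (ev0R B C) x = x₀ ∧ F.map (ev1R B C) x = x₁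

/-!
STATEMENT 7: Let `B` be a commutative ring and `F` a functor from commutative
`B`-algebras to groups.  If two points `x₀, x₁ ∈ F(B)` are R-equivalent (i.e. related
by the equivalence relation generated by direct R-equivalence) then they are directly
R-equivalent.
-/


/-! ### Auxiliary constructions and lemmas -/

section Aux

variable (B : Type u) [CommRing B] (C : Type u) [CommRing C] [Algebra B C]

/-- The canonical inclusion `C → C[t]_Σ` (constant polynomials), as a `B`-algebra hom. -/
def constHom : C →ₐ[B] RLoc C :=
  (IsScalarTower.toAlgHom B (Polynomial C) (RLoc C)).comp
    ((Algebra.ofId C (Polynomial C)).restrictScalars B)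

lemma constHom_apply (c : C) :
    constHom B C c = algebraMap (Polynomial C) (RLoc C) (Polynomial.C c) := rfl

lemma ev0R_algebraMap (P : Polynomial C) :
    ev0R B C (algebraMap (Polynomial C) (RLoc C) P) = Polynomial.aeval (0 : C) P := by
  simp [ev0R, IsLocalization.liftAlgHom_apply, IsLocalization.lift_eq]

lemma ev1R_algebraMap (P : Polynomial C) :
    ev1R B C (algebraMap (Polynomial C) (RLoc C) P) = Polynomial.aeval (1 : C) P := by
  simp [ev1R, IsLocalization.liftAlgHom_apply, IsLocalization.lift_eq]

lemma ev0R_comp_constHom : (ev0R B C).comp (constHom B C) = AlgHom.id B C := by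
  refine AlgHom.ext fun c => ?_
  simp [constHom_apply, ev0R_algebraMap]

lemma ev1R_comp_constHom : (ev1R B C).comp (constHom B C) = AlgHom.id B C := by
  refine AlgHom.ext fun c => ?_
  simp [constHom_apply, ev1R_algebraMap]

lemma aeval_one_sub_X_mem (P : Polynomial C) (hP : P ∈ RSigma C) :
    Polynomial.aeval (1 - Polynomial.X : Polynomial C) P ∈ RSigma C := by
  obtain ⟨h0, h1⟩ := mem_RSigma.mp hP
  rw [mem_RSigma, ← Polynomial.comp_eq_aeval]
  constructor
  · simpa [Polynomial.eval_comp] using h1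
  · simpa [Polynomial.eval_comp] using h0

/-- The involution of `C[t]_Σ` induced by `t ↦ 1 - t`, as a `B`-algebra hom. -/
def swapHom : RLoc C →ₐ[B] RLoc C :=
  IsLocalization.liftAlgHom (M := RSigma C)
    (f := (IsScalarTower.toAlgHom B (Polynomial C) (RLoc C)).comp
      ((Polynomial.aeval (1 - Polynomial.X : Polynomial C)).restrictScalars B))
    (fun y => IsLocalization.map_units (RLoc C)
      (⟨Polynomial.aeval (1 - Polynomial.X : Polynomial C) y.1,
        aeval_one_sub_X_mem C y.1 y.2⟩ : RSigma C))

lemma swapHom_algebraMap (P : Polynomial C) :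
    swapHom B C (algebraMap (Polynomial C) (RLoc C) P)
      = algebraMap (Polynomial C) (RLoc C)
          (Polynomial.aeval (1 - Polynomial.X : Polynomial C) P) := by
  exact IsLocalization.lift_eq _ P

lemma ev0R_comp_swapHom : (ev0R B C).comp (swapHom B C) = ev1R B C := by
  apply AlgHom.coe_ringHom_injective
  apply IsLocalization.ringHom_ext (RSigma C)
  refine RingHom.ext fun P => ?_
  show ev0R B C (swapHom B C (algebraMap (Polynomial C) (RLoc C) P))
      = ev1R B C (algebraMap (Polynomial C) (RLoc C) P)
  rw [swapHom_algebraMap, ev0R_algebraMap, ev1R_algebraMap,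
    ← Polynomial.comp_eq_aeval, Polynomial.aeval_comp]
  simp

lemma ev1R_comp_swapHom : (ev1R B C).comp (swapHom B C) = ev0R B C := by
  apply AlgHom.coe_ringHom_injective
  apply IsLocalization.ringHom_ext (RSigma C)
  refine RingHom.ext fun P => ?_
  show ev1R B C (swapHom B C (algebraMap (Polynomial C) (RLoc C) P))
      = ev0R B C (algebraMap (Polynomial C) (RLoc C) P)
  rw [swapHom_algebraMap, ev1R_algebraMap, ev0R_algebraMap,
    ← Polynomial.comp_eq_aeval, Polynomial.aeval_comp]
  simp

variable {B C}
variable (F : GroupValuedFunctor B)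

attribute [local instance] GroupValuedFunctor.grp

lemma GVF.map_mul' {D E : Type u} [CommRing D] [Algebra B D] [CommRing E] [Algebra B E]
    (f : D →ₐ[B] E) (x y : F.obj D) :
    F.map f (x * y) = F.map f x * F.map f y := F.map_mul f x y

lemma GVF.map_one {D E : Type u} [CommRing D] [Algebra B D] [CommRing E] [Algebra B E]
    (f : D →ₐ[B] E) :
    F.map f (1 : F.obj D) = 1 := by
  have := GVF.map_mul' F f (1 : F.obj D) 1
  rw [one_mul] at this
  exact left_eq_mul.mp this

lemma GVF.map_inv {D E : Type u} [CommRing D] [Algebra B D] [CommRing E] [Algebra B E]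
    (f : D →ₐ[B] E) (x : F.obj D) :
    F.map f x⁻¹ = (F.map f x)⁻¹ := by
  have := GVF.map_mul' F f x x⁻¹
  rw [mul_inv_cancel, GVF.map_one] at this
  exact eq_inv_of_mul_eq_one_right this.symm

lemma DirectRG.refl (x : F.obj C) : DirectRG B F C x x := by
  refine ⟨F.map (constHom B C) x, ?_, ?_⟩
  · rw [← Function.comp_apply (f := F.map (ev0R B C)), ← F.map_comp,
      ev0R_comp_constHom, F.map_id, id]
  · rw [← Function.comp_apply (f := F.map (ev1R B C)), ← F.map_comp,
      ev1R_comp_constHom, F.map_id, id]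

lemma DirectRG.symm {x y : F.obj C} (h : DirectRG B F C x y) : DirectRG B F C y x := by
  obtain ⟨z, h0, h1⟩ := h
  refine ⟨F.map (swapHom B C) z, ?_, ?_⟩
  · rw [← Function.comp_apply (f := F.map (ev0R B C)), ← F.map_comp, ev0R_comp_swapHom, h1]
  · rw [← Function.comp_apply (f := F.map (ev1R B C)), ← F.map_comp, ev1R_comp_swapHom, h0]

lemma DirectRG.trans {x y z : F.obj C} (hxy : DirectRG B F C x y)
    (hyz : DirectRG B F C y z) : DirectRG B F C x z := by
  obtain ⟨a, ha0, ha1⟩ := hxy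
  obtain ⟨b, hb0, hb1⟩ := hyz
  have hc0 : F.map (ev0R B C) (F.map (constHom B C) y) = y := by
    rw [← Function.comp_apply (f := F.map (ev0R B C)), ← F.map_comp,
      ev0R_comp_constHom, F.map_id, id]
  have hc1 : F.map (ev1R B C) (F.map (constHom B C) y) = y := by
    rw [← Function.comp_apply (f := F.map (ev1R B C)), ← F.map_comp,
      ev1R_comp_constHom, F.map_id, id]
  refine ⟨a * (F.map (constHom B C) y)⁻¹ * b, ?_, ?_⟩
  · rw [GVF.map_mul', GVF.map_mul', GVF.map_inv, ha0, hb0, hc0]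
    group
  · rw [GVF.map_mul', GVF.map_mul', GVF.map_inv, ha1, hb1, hc1]
    group

end Aux

theorem R_equivalent_iff_directly_R_equivalent_for_group_functors
    (B : Type u) [CommRing B] (F : GroupValuedFunctor B) (x₀ x₁ : F.obj B)
    (h : Relation.EqvGen (DirectRG B F B) x₀ x₁) :
    DirectRG B F B x₀ x₁ := by
  induction h with
  | rel _ _ h => exact h
  | refl x => exact DirectRG.refl F x
  | symm _ _ _ ih => exact DirectRG.symm F ih
  | trans _ _ _ _ _ ih1 ih2 => exact DirectRG.trans F ih1 ih2
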